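/- Let R > 0, c ∈ ℝ, α∞ ∈ ℂ with Re α∞ ≥ 0 and α∞ ≠ 0. Define for t ∈ ℝ the function Σ₀(t) = (t + α∞ c)² + (α∞² − 1) R². If |α∞| ≠ 1 or Im α∞ ≠ 0, then for t ≥ r := sqrt(R² + c²) with c ≥ 0 one has Σ₀(t) ≠ 0 whenever Re α∞ > 0, so the kernel 1/sqrt((t + α∞ c)² + (α∞² − 1)R²) appearing in the time-domain half-space Green's function is well defined for t ≥ r. -/

import Mathlib

/-- Non-vanishing of the expression under the square root in Ochmann's time-domain Green's
function: for R > 0, c ≥ 0, Re αinf > 0, αinf ≠ 0, and (|αinf| ≠ 1 or Im αinf ≠ 0),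
Σ₀(t) = (t + αinf·c)² + (αinf² − 1)R² ≠ 0 for all t ≥ √(R² + c²). -/
theorem stmt12 (R c : ℝ) (hR : 0 < R) (hc : 0 ≤ c) (αinf : ℂ)
    (hα : 0 < αinf.re) (hα0 : αinf ≠ 0)
    (hnd : ‖αinf‖ ≠ 1 ∨ αinf.im ≠ 0) :
    ∀ t : ℝ, Real.sqrt (R ^ 2 + c ^ 2) ≤ t →
      ((t : ℂ) + αinf * c) ^ 2 + (αinf ^ 2 - 1) * (R : ℂ) ^ 2 ≠ 0 := by
  intro t ht heq
  set a := αinf.re with ha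
  set b := αinf.im with hb
  have hsn : (0:ℝ) ≤ R ^ 2 + c ^ 2 := by positivity
  have hts : (0:ℝ) ≤ Real.sqrt (R ^ 2 + c ^ 2) := Real.sqrt_nonneg _
  have ht0 : 0 ≤ t := le_trans hts ht
  have ht2 : R ^ 2 + c ^ 2 ≤ t ^ 2 := by
    nlinarith [Real.sq_sqrt hsn]
  rw [Complex.ext_iff] at heq
  obtain ⟨hre, him⟩ := heq
  simp only [Complex.add_re, Complex.add_im, Complex.mul_re, Complex.mul_im,
    Complex.sub_re, Complex.sub_im, 
    Complex.ofReal_re, Complex.ofReal_im, Complex.one_re, Complex.one_im,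
    Complex.zero_re, Complex.zero_im, pow_two] at hre him
  have hb0 : b = 0 := by
    have hfac : b * ((t + a * c) * c + a * R ^ 2) = 0 := by nlinarith [him]
    have hpos : 0 < (t + a * c) * c + a * R ^ 2 := by positivity
    exact (mul_eq_zero.mp hfac).resolve_right (ne_of_gt hpos)
  rw [← ha, ← hb, hb0] at hre
  nlinarith [hre, ht2, mul_nonneg ht0 (mul_nonneg hα.le hc), sq_nonneg (a * c), mul_pos (mul_pos hα hα) (mul_pos hR hR)]
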